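/- Fix m > 0 and define Ψ : C^2 → C^2 by Ψ(z_1,z_2) = ((1+2mV)^{1/2} e^{m(V−U)} z_1, (1+2mU)^{1/2} e^{m(U−V)} z_2), where (U,V) is determined by |z_1|^2 = e^{2m(U−V)}U, |z_2|^2 = e^{2m(V−U)}V with U,V ≥ 0. Then Ψ is a bijection of C^2 onto C^2. -/

import Mathlib

private lemma lebrun_exA (m a b : ℝ) (hm : 0 < m) (ha : 0 ≤ a) (hb : 0 ≤ b) :
    ∃ U V : ℝ, 0 ≤ U ∧ 0 ≤ V ∧ a = Real.exp (2*m*(U-V)) * U ∧ b = Real.exp (2*m*(V-U)) * V := by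
  set T := a + b with hT
  set f : ℝ → ℝ := fun t => a * Real.exp (-(2*m*t)) - b * Real.exp (2*m*t) - t with hf
  have hcont : ContinuousOn f (Set.Icc (-T) T) := by fun_prop
  have hfT : f T ≤ 0 := by
    have h2 : Real.exp (-(2*m*T)) ≤ 1 := Real.exp_le_one_iff.mpr (by nlinarith)
    have h3 : (0:ℝ) ≤ b * Real.exp (2*m*T) := by positivity
    simp only [hf]
    nlinarith [Real.exp_pos (-(2*m*T))]
  have hfmT : 0 ≤ f (-T) := by
    have h2 : 1 ≤ Real.exp (2*m*T) := Real.one_le_exp_iff.mpr (by nlinarith)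
    have h3 : Real.exp (-(2*m*T)) ≤ 1 := Real.exp_le_one_iff.mpr (by nlinarith)
    simp only [hf]
    have h4 : a * Real.exp (-(2*m*(-T))) = a * Real.exp (2*m*T) := by ring_nf
    have h5 : b * Real.exp (2*m*(-T)) = b * Real.exp (-(2*m*T)) := by ring_nf
    rw [h4, h5]
    nlinarith [Real.exp_pos (2*m*T)]
  obtain ⟨t, ht, hft⟩ := intermediate_value_Icc' (by nlinarith : -T ≤ T) hcont ⟨hfT, hfmT⟩
  refine ⟨a * Real.exp (-(2*m*t)), b * Real.exp (2*m*t), by positivity, by positivity, ?_, ?_⟩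
  · have hUV : a * Real.exp (-(2*m*t)) - b * Real.exp (2*m*t) = t := by
      simp only [hf] at hft; linarith
    rw [hUV, mul_comm a, ← mul_assoc, ← Real.exp_add]
    simp
  · have hUV : b * Real.exp (2*m*t) - a * Real.exp (-(2*m*t)) = -t := by
      simp only [hf] at hft; linarith
    rw [show 2*m*(b * Real.exp (2*m*t) - a * Real.exp (-(2*m*t))) = 2*m*(-t) by rw [hUV]]
    rw [mul_comm b, ← mul_assoc, ← Real.exp_add]
    ring_nf
    simp

private lemma lebrun_exB (m a b : ℝ) (hm : 0 < m) (ha : 0 ≤ a) (hb : 0 ≤ b) :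
    ∃ U V : ℝ, 0 ≤ U ∧ 0 ≤ V ∧ a = (1+2*m*V)*U ∧ b = (1+2*m*U)*V := by
  set g : ℝ → ℝ := fun V => V + 2*m*a*V/(1+2*m*V) with hg
  have hcont : ContinuousOn g (Set.Icc 0 b) := by
    apply ContinuousOn.add continuousOn_id
    apply ContinuousOn.div (by fun_prop) (by fun_prop)
    intro x hx
    nlinarith [hx.1]
  have hg0 : g 0 = 0 := by simp [hg]
  have hgb : b ≤ g b := by
    have h1 : 0 ≤ 2*m*a*b/(1+2*m*b) := by positivity
    simp only [hg]; linarith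
  obtain ⟨V, hVmem, hgV⟩ := intermediate_value_Icc hb hcont ⟨by rw [hg0]; exact hb, hgb⟩
  have hV : 0 ≤ V := hVmem.1
  have hden : (0:ℝ) < 1 + 2*m*V := by nlinarith
  refine ⟨a/(1+2*m*V), V, div_nonneg ha hden.le, hV, by field_simp, ?_⟩
  simp only [hg] at hgV
  field_simp at hgV ⊢
  linarith [hgV]

private lemma lebrun_uniq (m U V U' V' : ℝ) (hm : 0 < m) (hU : 0 ≤ U) (hV : 0 ≤ V)
    (hU' : 0 ≤ U') (hV' : 0 ≤ V')
    (e1 : (1+2*m*V)*U = (1+2*m*V')*U') (e2 : (1+2*m*U)*V = (1+2*m*U')*V') :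
    U = U' ∧ V = V' := by
  have hA : (U - U') * (1 + 2*m*(V + U')) = 0 := by linear_combination (1+2*m*U')*e1 - (2*m*U')*e2
  have hpos : (0:ℝ) < 1 + 2*m*(V + U') := by nlinarith
  have hUU : U = U' := by
    rcases mul_eq_zero.mp hA with h | h
    · linarith
    · linarith
  refine ⟨hUU, ?_⟩
  rw [hUU] at e2
  have hpos2 : (0:ℝ) < 1 + 2*m*U' := by nlinarith
  exact mul_left_cancel₀ hpos2.ne' e2

private lemma lebrun_normsq (r : ℝ) (hr : 0 ≤ r) (z : ℂ) : ‖(r:ℂ) * z‖^2 = r^2 * ‖z‖^2 := by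
  rw [norm_mul, Complex.norm_real, mul_pow, Real.norm_eq_abs, abs_of_nonneg hr]

private lemma lebrun_keynorm (m U V : ℝ) (hpos : 0 ≤ 1+2*m*V) (z₁ : ℂ)
    (h : ‖z₁‖^2 = Real.exp (2*m*(U-V)) * U) :
    ‖((Real.sqrt (1+2*m*V) * Real.exp (m*(V-U)) : ℝ) : ℂ) * z₁‖^2 = (1+2*m*V) * U := by
  have hr : 0 ≤ Real.sqrt (1+2*m*V) * Real.exp (m*(V-U)) := by positivity
  rw [lebrun_normsq _ hr, mul_pow, Real.sq_sqrt hpos, h]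
  have e : Real.exp (m*(V-U))^2 * Real.exp (2*m*(U-V)) = 1 := by
    rw [sq, ← Real.exp_add, ← Real.exp_add, show m*(V-U)+m*(V-U)+2*m*(U-V) = 0 by ring,
      Real.exp_zero]
  linear_combination ((1+2*m*V)*U) * e

private lemma lebrun_invnorm (m U V : ℝ) (hpos : 0 < 1+2*m*V) (w₁ : ℂ)
    (h : ‖w₁‖^2 = (1+2*m*V) * U) :
    ‖(((Real.sqrt (1+2*m*V) * Real.exp (m*(V-U)))⁻¹ : ℝ) : ℂ) * w₁‖^2
      = Real.exp (2*m*(U-V)) * U := by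
  have hr : 0 < Real.sqrt (1+2*m*V) * Real.exp (m*(V-U)) := by positivity
  rw [lebrun_normsq _ (by positivity), h, inv_pow, mul_pow, Real.sq_sqrt hpos.le]
  have e : Real.exp (m*(V-U))^2 * Real.exp (2*m*(U-V)) = 1 := by
    rw [sq, ← Real.exp_add, ← Real.exp_add, show m*(V-U)+m*(V-U)+2*m*(U-V) = 0 by ring,
      Real.exp_zero]
  have hne : ((1+2*m*V) * Real.exp (m*(V-U))^2) ≠ 0 := by positivity
  field_simp
  linear_combination (-U) * e

theorem stmt_15 (m : ℝ) (hm : 0 < m) (Ψ : ℂ × ℂ → ℂ × ℂ)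
    (hΨ : ∀ z : ℂ × ℂ, ∀ U V : ℝ, 0 ≤ U → 0 ≤ V →
      ‖z.1‖ ^ 2 = Real.exp (2 * m * (U - V)) * U →
      ‖z.2‖ ^ 2 = Real.exp (2 * m * (V - U)) * V →
      Ψ z = ((Real.sqrt (1 + 2 * m * V) * Real.exp (m * (V - U)) : ℝ) * z.1,
             (Real.sqrt (1 + 2 * m * U) * Real.exp (m * (U - V)) : ℝ) * z.2)) :
    Function.Bijective Ψ := by
  constructor
  · -- injective
    intro z z' hzz
    obtain ⟨U, V, hU, hV, h1, h2⟩ :=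
      lebrun_exA m (‖z.1‖^2) (‖z.2‖^2) hm (by positivity) (by positivity)
    obtain ⟨U', V', hU', hV', h1', h2'⟩ :=
      lebrun_exA m (‖z'.1‖^2) (‖z'.2‖^2) hm (by positivity) (by positivity)
    have hz := hΨ z U V hU hV h1 h2
    have hz' := hΨ z' U' V' hU' hV' h1' h2'
    rw [hz, hz', Prod.mk.injEq] at hzz
    obtain ⟨hw1, hw2⟩ := hzz
    have hn1 : (1+2*m*V) * U = (1+2*m*V') * U' := by
      have a1 := lebrun_keynorm m U V (by nlinarith) z.1 h1
      have a1' := lebrun_keynorm m U' V' (by nlinarith) z'.1 h1'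
      rw [hw1] at a1
      rw [a1] at a1'
      exact a1'
    have hn2 : (1+2*m*U) * V = (1+2*m*U') * V' := by
      have a2 := lebrun_keynorm m V U (by nlinarith) z.2 h2
      have a2' := lebrun_keynorm m V' U' (by nlinarith) z'.2 h2'
      rw [hw2] at a2
      rw [a2] at a2'
      exact a2'
    obtain ⟨hUU, hVV⟩ := lebrun_uniq m U V U' V' hm hU hV hU' hV' hn1 hn2
    subst hUU; subst hVV
    have hc1 : ((Real.sqrt (1 + 2 * m * V) * Real.exp (m * (V - U)) : ℝ) : ℂ) ≠ 0 := by
      exact_mod_cast (by positivity : (0:ℝ) < Real.sqrt (1 + 2 * m * V) * Real.exp (m * (V - U))).ne'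
    have hc2 : ((Real.sqrt (1 + 2 * m * U) * Real.exp (m * (U - V)) : ℝ) : ℂ) ≠ 0 := by
      exact_mod_cast (by positivity : (0:ℝ) < Real.sqrt (1 + 2 * m * U) * Real.exp (m * (U - V))).ne'
    exact Prod.ext (mul_left_cancel₀ hc1 hw1) (mul_left_cancel₀ hc2 hw2)
  · -- surjective
    intro w
    obtain ⟨U, V, hU, hV, e1, e2⟩ :=
      lebrun_exB m (‖w.1‖^2) (‖w.2‖^2) hm (by positivity) (by positivity)
    have hpV : (0:ℝ) < 1+2*m*V := by nlinarith
    have hpU : (0:ℝ) < 1+2*m*U := by nlinarith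
    set c1 : ℝ := Real.sqrt (1+2*m*V) * Real.exp (m*(V-U)) with hc1d
    set c2 : ℝ := Real.sqrt (1+2*m*U) * Real.exp (m*(U-V)) with hc2d
    have hc1p : 0 < c1 := by rw [hc1d]; positivity
    have hc2p : 0 < c2 := by rw [hc2d]; positivity
    refine ⟨(((c1⁻¹ : ℝ) : ℂ) * w.1, ((c2⁻¹ : ℝ) : ℂ) * w.2), ?_⟩
    have h1 : ‖(((c1⁻¹ : ℝ) : ℂ) * w.1 : ℂ)‖^2 = Real.exp (2*m*(U-V)) * U :=
      lebrun_invnorm m U V hpV w.1 e1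
    have h2 : ‖(((c2⁻¹ : ℝ) : ℂ) * w.2 : ℂ)‖^2 = Real.exp (2*m*(V-U)) * V :=
      lebrun_invnorm m V U hpU w.2 e2
    have hz := hΨ (((c1⁻¹ : ℝ) : ℂ) * w.1, ((c2⁻¹ : ℝ) : ℂ) * w.2) U V hU hV h1 h2
    rw [hz]
    refine Prod.ext ?_ ?_
    · show ((c1 : ℝ) : ℂ) * (((c1⁻¹ : ℝ) : ℂ) * w.1) = w.1
      rw [← mul_assoc, ← Complex.ofReal_mul, mul_inv_cancel₀ hc1p.ne']
      simp
    · show ((c2 : ℝ) : ℂ) * (((c2⁻¹ : ℝ) : ℂ) * w.2) = w.2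
      rw [← mul_assoc, ← Complex.ofReal_mul, mul_inv_cancel₀ hc2p.ne']
      simp
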